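/- Fix λ > 0 and for ν > 0 let p_ν denote the CMP probability mass function with parameters (λ, ν). As ν → ∞, the CMP distribution converges to the Bernoulli distribution with success probability λ/(1 + λ): p_ν(0) → 1/(1 + λ), p_ν(1) → λ/(1 + λ), and p_ν(y) → 0 for every y ≥ 2. -/

import Mathlib

open Filter Real

/-- The Conway–Maxwell Poisson normalizing constant
`ζ(λ, ν) = ∑_{s=0}^∞ λ^s / (s!)^ν`. -/
noncomputable def cmpZeta (lam nu : ℝ) : ℝ :=
  ∑' s : ℕ, lam ^ s / (s.factorial : ℝ) ^ nu

/-- The CMP probability mass function `p_ν(y) = λ^y / ((y!)^ν ζ(λ, ν))`. -/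
noncomputable def cmpPmf (lam nu : ℝ) (y : ℕ) : ℝ :=
  lam ^ y / ((y.factorial : ℝ) ^ nu * cmpZeta lam nu)

lemma cmp_summable (lam : ℝ) (hlam : 0 < lam) {nu : ℝ} (hnu : 1 ≤ nu) :
    Summable (fun s : ℕ => lam ^ s / (s.factorial : ℝ) ^ nu) := by
  refine Summable.of_nonneg_of_le (fun s => by positivity) (fun s => ?_)
    (Real.summable_pow_div_factorial lam)
  have h1 : (1:ℝ) ≤ (s.factorial : ℝ) := by exact_mod_cast s.factorial_pos
  have hle : (s.factorial : ℝ) ≤ (s.factorial : ℝ) ^ nu := by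
    calc (s.factorial:ℝ) = (s.factorial:ℝ) ^ (1:ℝ) := (Real.rpow_one _).symm
    _ ≤ _ := Real.rpow_le_rpow_of_exponent_le h1 hnu
  exact div_le_div_of_nonneg_left (pow_nonneg hlam.le s)
    (by exact_mod_cast s.factorial_pos) hle

lemma natpow_rpow (b : ℝ) (hb : 0 ≤ b) (nu : ℝ) (n : ℕ) :
    ((b ^ n : ℝ)) ^ nu = (b ^ nu) ^ n := by
  rw [← Real.rpow_natCast b n, ← Real.rpow_mul hb, mul_comm, Real.rpow_mul hb,
    Real.rpow_natCast]

lemma cmp_zeta_tendsto (lam : ℝ) (hlam : 0 < lam) :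
    Tendsto (fun nu : ℝ => cmpZeta lam nu) atTop (nhds (1 + lam)) := by
  set T : ℝ → ℝ := fun nu => ∑' s : ℕ, lam ^ (s + 2) / (((s + 2).factorial : ℝ)) ^ nu with hT
  have hdecomp : ∀ nu : ℝ, 1 ≤ nu → cmpZeta lam nu = 1 + lam + T nu := by
    intro nu hnu
    have hs := cmp_summable lam hlam hnu
    have h2 := Summable.sum_add_tsum_nat_add 2 hs
    rw [cmpZeta, ← h2]
    simp [Finset.sum_range_succ, Real.one_rpow, hT]
  have hq0 : Tendsto (fun nu : ℝ => lam / (2:ℝ) ^ nu) atTop (nhds 0) := by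
    have h := (tendsto_rpow_atTop_of_base_lt_one (2⁻¹) (by norm_num) (by norm_num)).const_mul lam
    rw [mul_zero] at h
    refine h.congr fun nu => ?_
    rw [Real.inv_rpow (by norm_num)]
    ring
  -- tail bound
  have hTbound : ∀ nu : ℝ, 1 ≤ nu → lam / (2:ℝ) ^ nu ≤ 1/2 →
      T nu ≤ 2 * lam * (lam / (2:ℝ) ^ nu) := by
    intro nu hnu hqle
    set q : ℝ := lam / (2:ℝ) ^ nu with hqdef
    have h2pos : (0:ℝ) < (2:ℝ) ^ nu := Real.rpow_pos_of_pos two_pos nu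
    have hq0' : 0 ≤ q := by positivity
    have htsum_le : T nu ≤ ∑' s : ℕ, lam * q * (1/2:ℝ) ^ s := by
      refine Summable.tsum_le_tsum (fun s => ?_)
        ((summable_nat_add_iff 2).mpr (cmp_summable lam hlam hnu))
        ((summable_geometric_of_lt_one (by norm_num) (by norm_num)).mul_left _)
      have hfact : ((2:ℝ) ^ (s+1)) ≤ ((s + 2).factorial : ℝ) := by
        have h := @Nat.factorial_mul_pow_le_factorial 1 (s+1)
        rw [Nat.factorial_one, one_mul, (by omega : 1 + (s+1) = s + 2)] at h
        exact_mod_cast h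
      have hden : ((2:ℝ) ^ (s+1)) ^ nu ≤ (((s + 2).factorial : ℝ)) ^ nu :=
        Real.rpow_le_rpow (by positivity) hfact (le_trans zero_le_one hnu)
      have step1 : lam ^ (s + 2) / (((s + 2).factorial : ℝ)) ^ nu
          ≤ lam ^ (s + 2) / ((2:ℝ) ^ (s+1)) ^ nu :=
        div_le_div_of_nonneg_left (pow_nonneg hlam.le _) (by positivity) hden
      have step2 : lam ^ (s + 2) / ((2:ℝ) ^ (s+1)) ^ nu = lam * q ^ (s+1) := by
        rw [natpow_rpow (2:ℝ) (by norm_num) nu (s+1), hqdef, div_pow]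
        field_simp
        ring
      have step3 : lam * q ^ (s+1) ≤ lam * q * (1/2:ℝ) ^ s := by
        have hqs : q ^ s ≤ (1/2:ℝ) ^ s := pow_le_pow_left₀ hq0' hqle s
        calc lam * q ^ (s+1) = lam * q * q ^ s := by ring
          _ ≤ lam * q * (1/2:ℝ) ^ s :=
              mul_le_mul_of_nonneg_left hqs (by positivity)
      calc lam ^ (s + 2) / (((s + 2).factorial : ℝ)) ^ nu
          ≤ lam ^ (s + 2) / ((2:ℝ) ^ (s+1)) ^ nu := step1
        _ = lam * q ^ (s+1) := step2
        _ ≤ lam * q * (1/2:ℝ) ^ s := step3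
    calc T nu ≤ ∑' s : ℕ, lam * q * (1/2:ℝ) ^ s := htsum_le
      _ = lam * q * 2 := by
          rw [tsum_mul_left, tsum_geometric_of_lt_one (by norm_num) (by norm_num)]
          norm_num
      _ = 2 * lam * q := by ring
  have hTtendsto : Tendsto T atTop (nhds 0) := by
    refine squeeze_zero' (g := fun nu => 2 * lam * (lam / (2:ℝ) ^ nu)) ?_ ?_ ?_
    · filter_upwards [eventually_ge_atTop (1:ℝ)] with nu hnu
      exact tsum_nonneg fun s => by positivity
    · filter_upwards [eventually_ge_atTop (1:ℝ),
        hq0.eventually (eventually_le_nhds (by norm_num : (0:ℝ) < 1/2))] with nu hnu hqle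
      exact hTbound nu hnu hqle
    · have := hq0.const_mul (2 * lam)
      rwa [mul_zero] at this
  have hadd : Tendsto (fun nu : ℝ => 1 + lam + T nu) atTop (nhds ((1 + lam) + 0)) :=
    Tendsto.add tendsto_const_nhds hTtendsto
  rw [add_zero] at hadd
  refine hadd.congr' ?_
  filter_upwards [eventually_ge_atTop (1:ℝ)] with nu hnu
  exact (hdecomp nu hnu).symm

/-- Fix `λ > 0`. As `ν → ∞`, the CMP distribution converges to the Bernoulli distribution
with success probability `λ/(1 + λ)`: `p_ν(0) → 1/(1 + λ)`, `p_ν(1) → λ/(1 + λ)`,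
and `p_ν(y) → 0` for every `y ≥ 2`. -/
theorem cmp_tendsto_bernoulli (lam : ℝ) (hlam : 0 < lam) :
    Filter.Tendsto (fun nu : ℝ => cmpPmf lam nu 0) Filter.atTop (nhds (1 / (1 + lam))) ∧
    Filter.Tendsto (fun nu : ℝ => cmpPmf lam nu 1) Filter.atTop (nhds (lam / (1 + lam))) ∧
    ∀ y : ℕ, 2 ≤ y →
      Filter.Tendsto (fun nu : ℝ => cmpPmf lam nu y) Filter.atTop (nhds 0) := by
  have hz := cmp_zeta_tendsto lam hlam
  have hne : (1 + lam) ≠ 0 := by linarith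
  refine ⟨?_, ?_, ?_⟩
  · have := tendsto_const_nhds.div hz hne (f := fun _ : ℝ => (1:ℝ))
    refine this.congr fun nu => ?_
    simp [cmpPmf, Real.one_rpow]
  · have := tendsto_const_nhds.div hz hne (f := fun _ : ℝ => lam)
    refine this.congr fun nu => ?_
    simp [cmpPmf, Nat.factorial, Real.one_rpow]
  · intro y hy
    have hfact : (1:ℝ) < (y.factorial : ℝ) := by
      have : 2 ≤ y.factorial := Nat.self_le_factorial y |>.trans' hy
      exact_mod_cast lt_of_lt_of_le one_lt_two (by exact_mod_cast this)
    have hpow : Tendsto (fun nu : ℝ => ((y.factorial : ℝ)) ^ nu) atTop atTop := by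
      have hlog : 0 < Real.log (y.factorial : ℝ) := Real.log_pos hfact
      have : Tendsto (fun nu : ℝ => Real.exp (Real.log (y.factorial : ℝ) * nu)) atTop atTop :=
        Real.tendsto_exp_atTop.comp (Tendsto.const_mul_atTop hlog tendsto_id)
      refine this.congr fun nu => ?_
      rw [Real.rpow_def_of_pos (lt_trans one_pos hfact)]
    have hden : Tendsto (fun nu : ℝ => ((y.factorial : ℝ)) ^ nu * cmpZeta lam nu) atTop atTop :=
      Tendsto.atTop_mul_pos (by linarith : (0:ℝ) < 1 + lam) hpow hz
    exact Tendsto.div_atTop tendsto_const_nhds hden
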